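/- For independent Poisson random variables η₁, η₂ each with mean λ > 0, one has P(η₁ - η₂ ∈ {0, 1}) ≤ √(2/(πλ)). -/

import Mathlib

open MeasureTheory ProbabilityTheory
open scoped ENNReal NNReal
open Real Filter

private lemma sqrt_pi_le_stirlingSeq (n : ℕ) (hn : 1 ≤ n) : √π ≤ Stirling.stirlingSeq n := by
  obtain ⟨m, rfl⟩ := Nat.exists_eq_add_of_le hn
  have h := Antitone.le_of_tendsto Stirling.stirlingSeq'_antitone
    ((Stirling.tendsto_stirlingSeq_sqrt_pi).comp (tendsto_add_atTop_nat 1) |>.congr (fun n => rfl)) m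
  simpa [Function.comp, Nat.succ_eq_add_one, Nat.add_comm] using h

private lemma central_binom_bound (n : ℕ) (hn : 1 ≤ n) :
    ((2 * n).factorial : ℝ) * √(π * n) ≤ 4 ^ n * (n.factorial : ℝ) ^ 2 := by
  have hn0 : (0:ℝ) < n := by exact_mod_cast hn
  have he : (0:ℝ) < exp 1 := exp_pos 1
  set a : ℝ := ((n : ℝ) / exp 1) ^ n with ha
  have ha0 : 0 < a := pow_pos (div_pos hn0 he) n
  have hs1 : √π ≤ Stirling.stirlingSeq n := sqrt_pi_le_stirlingSeq n hn
  have hspos : 0 < Stirling.stirlingSeq n := lt_of_lt_of_le (by positivity) hs1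
  have hs2 : Stirling.stirlingSeq (2 * n) ≤ Stirling.stirlingSeq n := by
    obtain ⟨m, rfl⟩ := Nat.exists_eq_add_of_le hn
    obtain ⟨k, hk⟩ : ∃ k, 2 * (1 + m) = 1 + k + 1 := ⟨2 * m, by ring⟩
    rw [hk]
    have := Stirling.stirlingSeq'_antitone (show m ≤ k + 1 by omega)
    simpa [Function.comp, Nat.succ_eq_add_one, Nat.add_comm] using this
  have hden : (0:ℝ) < √(2 * n) * ((n : ℝ) / exp 1) ^ n := by positivity
  have hfact : (n.factorial : ℝ) = Stirling.stirlingSeq n * (√(2 * n) * ((n:ℝ) / exp 1) ^ n) := by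
    rw [Stirling.stirlingSeq, div_mul_cancel₀]; exact ne_of_gt hden
  have hden2 : (0:ℝ) < √(2 * ((2 * n : ℕ) : ℝ)) * (((2 * n : ℕ) : ℝ) / exp 1) ^ (2 * n) := by
    have : (0:ℝ) < ((2 * n : ℕ) : ℝ) := by positivity
    positivity
  have hfact2 : ((2 * n).factorial : ℝ)
      = Stirling.stirlingSeq (2 * n) * (√(2 * ((2 * n : ℕ):ℝ)) * (((2 * n : ℕ):ℝ) / exp 1) ^ (2 * n)) := by
    rw [Stirling.stirlingSeq, div_mul_cancel₀]; exact ne_of_gt hden2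
  have hcast : ((2 * n : ℕ) : ℝ) = 2 * (n : ℝ) := by push_cast; ring
  have hpow : (((2 * n : ℕ):ℝ) / exp 1) ^ (2 * n) = 4 ^ n * a ^ 2 := by
    rw [hcast, show (2 * (n:ℝ)) / exp 1 = 2 * ((n:ℝ) / exp 1) by ring, mul_pow,
      pow_mul 2 2 n, show 2 * n = n * 2 from mul_comm 2 n, pow_mul, ha]
    norm_num
  have hsqrt4 : √(2 * ((2 * n:ℕ):ℝ)) * √(π * n) = 2 * n * √π := by
    rw [hcast, ← Real.sqrt_mul (by positivity),
      show (2 * (2 * (n:ℝ)) * (π * n) : ℝ) = (2*n)^2 * π by ring,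
      Real.sqrt_mul (by positivity), Real.sqrt_sq (by positivity)]
  have hsq : (√(2 * n : ℝ)) ^ 2 = 2 * n := Real.sq_sqrt (by positivity)
  calc ((2 * n).factorial : ℝ) * √(π * n)
      = Stirling.stirlingSeq (2*n) * (4 ^ n * a ^ 2) * (√(2 * ((2*n:ℕ):ℝ)) * √(π * n)) := by
        rw [hfact2, hpow]; ring
    _ = Stirling.stirlingSeq (2*n) * (4 ^ n * a ^ 2) * (2 * n * √π) := by rw [hsqrt4]
    _ ≤ Stirling.stirlingSeq n * (4 ^ n * a ^ 2) * (2 * n * √π) := by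
        have h2 : (0:ℝ) ≤ √π := Real.sqrt_nonneg _
        gcongr
    _ ≤ Stirling.stirlingSeq n * (4 ^ n * a ^ 2) * (2 * n * Stirling.stirlingSeq n) := by
        gcongr
    _ = 4 ^ n * (Stirling.stirlingSeq n * (√(2 * n) * a)) ^ 2 := by
        rw [mul_pow, mul_pow, hsq]; ring
    _ = 4 ^ n * (n.factorial : ℝ) ^ 2 := by rw [← hfact]

private lemma mul_sqrt_eq (c x : ℝ) (hc : 0 ≤ c) (hx : 0 ≤ x) : c * √x = √(c^2 * x) := by
  rw [Real.sqrt_mul (by positivity) x, Real.sqrt_sq hc]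

private lemma key_even (j : ℕ) :
    ((2 * j).factorial : ℝ) * (√π * √(2 * j + 1)) ≤ 2 * 2 ^ (2 * j) * (j.factorial : ℝ) ^ 2 := by
  have h4 : (4 : ℝ) ^ j = 2 ^ (2 * j) := by rw [pow_mul]; norm_num
  rcases Nat.eq_zero_or_pos j with rfl | hj
  · simp only [Nat.mul_zero, Nat.factorial_zero, Nat.cast_one, mul_zero, pow_zero]
    have : √π ≤ 2 := by
      rw [show (2:ℝ) = √4 by rw [show (4:ℝ) = 2^2 by norm_num, Real.sqrt_sq]; norm_num]
      exact Real.sqrt_le_sqrt (by nlinarith [Real.pi_le_four])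
    norm_num
    nlinarith [Real.sqrt_nonneg π, this]
  · have hb := central_binom_bound j hj
    have hj1 : (1:ℝ) ≤ j := by exact_mod_cast hj
    have hmono : √π * √(2 * (j:ℝ) + 1) ≤ 2 * √(π * j) := by
      rw [← Real.sqrt_mul (le_of_lt Real.pi_pos) (2 * (j:ℝ) + 1),
        mul_sqrt_eq 2 (π * j) (by norm_num) (by positivity)]
      apply Real.sqrt_le_sqrt
      nlinarith [Real.pi_pos]
    calc ((2 * j).factorial : ℝ) * (√π * √(2 * j + 1))
        ≤ ((2 * j).factorial : ℝ) * (2 * √(π * j)) := by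
          have : (0:ℝ) ≤ ((2 * j).factorial : ℝ) := by positivity
          nlinarith
      _ = 2 * (((2 * j).factorial : ℝ) * √(π * j)) := by ring
      _ ≤ 2 * (4 ^ j * (j.factorial : ℝ) ^ 2) := by nlinarith
      _ = 2 * 2 ^ (2 * j) * (j.factorial : ℝ) ^ 2 := by rw [h4]; ring

private lemma key_odd (j : ℕ) :
    ((2 * j + 1).factorial : ℝ) * (√π * √(2 * j + 2)) ≤
      2 * 2 ^ (2 * j + 1) * ((j.factorial : ℝ) * ((j+1).factorial : ℝ)) := by
  have h4 : (4 : ℝ) ^ j = 2 ^ (2 * j) := by rw [pow_mul]; norm_num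
  rcases Nat.eq_zero_or_pos j with rfl | hj
  · simp only [Nat.mul_zero, Nat.zero_add, Nat.factorial_one, Nat.cast_one]
    have h2 : √π * √(2:ℝ) = √(π * 2) := (Real.sqrt_mul (le_of_lt Real.pi_pos) 2).symm
    have : √(π * 2) ≤ 4 := by
      rw [show (4:ℝ) = √16 by rw [show (16:ℝ) = 4^2 by norm_num, Real.sqrt_sq]; norm_num]
      exact Real.sqrt_le_sqrt (by nlinarith [Real.pi_le_four])
    norm_num
    calc √π * √(2:ℝ) = √(π * 2) := h2
      _ ≤ 4 := this
  · have hfac : ((2 * j + 1).factorial : ℝ) = ((2*j).factorial : ℝ) * (2 * j + 1) := by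
      rw [Nat.factorial_succ]; push_cast; ring
    have hfac2 : (((j+1)).factorial : ℝ) = (j.factorial : ℝ) * (j + 1) := by
      rw [Nat.factorial_succ]; push_cast; ring
    have hb := central_binom_bound j hj
    have hj1 : (1:ℝ) ≤ j := by exact_mod_cast hj
    have hmono : (2 * (j:ℝ) + 1) * (√π * √(2 * (j:ℝ) + 2)) ≤ 4 * ((j:ℝ)+1) * √(π * j) := by
      rw [← Real.sqrt_mul (le_of_lt Real.pi_pos) (2 * (j:ℝ) + 2),
        mul_sqrt_eq (2 * (j:ℝ) + 1) (π * (2 * (j:ℝ) + 2)) (by positivity) (by positivity),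
        mul_sqrt_eq (4 * ((j:ℝ)+1)) (π * j) (by positivity) (by positivity)]
      apply Real.sqrt_le_sqrt
      have hpoly : (2*(j:ℝ)+1)^2 * (2*(j:ℝ)+2) ≤ (4*((j:ℝ)+1))^2 * j := by nlinarith
      nlinarith [mul_le_mul_of_nonneg_left hpoly (le_of_lt Real.pi_pos)]
    have hfactnn : (0:ℝ) ≤ ((2*j).factorial : ℝ) := by positivity
    calc ((2 * j + 1).factorial : ℝ) * (√π * √(2 * j + 2))
        = ((2*j).factorial : ℝ) * ((2 * (j:ℝ) + 1) * (√π * √(2 * (j:ℝ) + 2))) := by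
          rw [hfac]; push_cast; ring
      _ ≤ ((2*j).factorial : ℝ) * (4 * ((j:ℝ)+1) * √(π * j)) := by
          nlinarith [mul_le_mul_of_nonneg_left hmono hfactnn]
      _ = 4 * ((j:ℝ)+1) * (((2*j).factorial : ℝ) * √(π * j)) := by ring
      _ ≤ 4 * ((j:ℝ)+1) * (4 ^ j * (j.factorial : ℝ) ^ 2) := by nlinarith
      _ = 2 * 2 ^ (2 * j + 1) * ((j.factorial : ℝ) * ((j.factorial : ℝ) * (j+1))) := by
          have h42 : (2:ℝ) ^ (2*j+1) = 2 * 4 ^ j := by rw [pow_succ, ← h4]; ring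
          rw [h42]; ring
      _ = 2 * 2 ^ (2 * j + 1) * ((j.factorial : ℝ) * ((j+1).factorial : ℝ)) := by rw [hfac2]

private lemma inv_sqrt_le_amgm (x u : ℝ) (hx : 0 < x) (hu : 0 < u) : 1/√x ≤ (1/u + u/x)/2 := by
  have hs : 0 < √x := Real.sqrt_pos.mpr hx
  have hs2 : √x ^ 2 = x := Real.sq_sqrt hx.le
  rw [div_add_div _ _ (ne_of_gt hu) (ne_of_gt hx), div_div, div_le_div_iff₀ hs (by positivity)]
  nlinarith [mul_nonneg (sq_nonneg (√x - u)) hs.le, hs, hu, hs2]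

/-- For i.i.d. Poisson(λ) variables η₁, η₂ with λ > 0,
P(η₁ - η₂ ∈ {0,1}) ≤ √(2/(πλ)). -/
theorem skellam_bound (lam : ℝ≥0) (hlam : 0 < lam) :
    (∑' j : ℕ, poissonPMF lam j * (poissonPMF lam j + poissonPMF lam (j + 1))) ≤
      ENNReal.ofReal (Real.sqrt (2 / (Real.pi * lam))) := by
  set l : ℝ := (lam : ℝ) with hldef
  have hl : 0 < l := hlam
  set p : ℕ → ℝ := fun j => rexp (-l) * l ^ j / (j.factorial : ℝ) with hpdef
  set P : ℕ → ℝ := fun m => rexp (-(2*l)) * (2*l) ^ m / (m.factorial : ℝ) with hPdef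
  have hpnn : ∀ j, 0 ≤ p j := fun j => by simp only [hpdef]; positivity
  have hPnn : ∀ m, 0 ≤ P m := fun m => by simp only [hPdef]; positivity
  have hpsum : HasSum p 1 := by
    have h := poissonPMFRealSum lam
    have he : (fun n => poissonPMFReal lam n) = p := by
      funext n
      simp only [poissonPMFReal, hpdef, ← hldef]
    rw [← he]; simpa only [poissonPMFReal] using h
  have hPsum : HasSum P 1 := by
    have h := poissonPMFRealSum (2 * lam)
    have he : (fun n => poissonPMFReal (2 * lam) n) = P := by
      funext n
      simp only [poissonPMFReal, hPdef]
      push_cast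
      rw [← hldef]
    rw [← he]; simpa only [poissonPMFReal] using h
  set u : ℝ := √(2*l) with hudef
  have hu : 0 < u := Real.sqrt_pos.mpr (by linarith)
  have hu2 : u ^ 2 = 2*l := Real.sq_sqrt (by linarith)
  have hspi : (0:ℝ) < √π := Real.sqrt_pos.mpr Real.pi_pos
  have claimE : ∀ j : ℕ, p j * p j ≤ 2/√π * (P (2*j) * (1 / √(2*(j:ℝ)+1))) := by
    intro j
    have hE : rexp (-l) * rexp (-l) = rexp (-(2*l)) := by rw [← Real.exp_add]; ring_nf
    have hs1 : (0:ℝ) < √(2*(j:ℝ)+1) := by positivity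
    have hfj : (0:ℝ) < (j.factorial : ℝ) := by positivity
    have hf2j : (0:ℝ) < ((2*j).factorial : ℝ) := by positivity
    have lhs_eq : p j * p j
        = (rexp (-l) * rexp (-l) * (l^j * l^j)) / ((j.factorial : ℝ) * (j.factorial : ℝ)) := by
      simp only [hpdef]; ring
    have rhs_eq : 2/√π * (P (2*j) * (1 / √(2*(j:ℝ)+1)))
        = (2 * (rexp (-(2*l)) * (2*l)^(2*j))) / (√π * (((2*j).factorial : ℝ) * √(2*(j:ℝ)+1))) := by
      simp only [hPdef]; ring
    rw [lhs_eq, rhs_eq, div_le_div_iff₀ (by positivity) (by positivity)]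
    have hpow : (2*l)^(2*j) = 2^(2*j) * (l^j * l^j) := by
      rw [mul_pow]; congr 1; rw [two_mul, pow_add]
    rw [hpow, ← hE]
    have hC : (0:ℝ) ≤ rexp (-l) * rexp (-l) * (l^j * l^j) := by positivity
    have hkey := key_even j
    nlinarith [mul_le_mul_of_nonneg_left hkey hC]
  have claimO : ∀ j : ℕ, p j * p (j+1) ≤ 2/√π * (P (2*j+1) * (1 / √(2*(j:ℝ)+2))) := by
    intro j
    have hE : rexp (-l) * rexp (-l) = rexp (-(2*l)) := by rw [← Real.exp_add]; ring_nf
    have hs1 : (0:ℝ) < √(2*(j:ℝ)+2) := by positivity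
    have lhs_eq : p j * p (j+1)
        = (rexp (-l) * rexp (-l) * (l^j * l^(j+1))) / ((j.factorial : ℝ) * ((j+1).factorial : ℝ)) := by
      simp only [hpdef]; ring
    have rhs_eq : 2/√π * (P (2*j+1) * (1 / √(2*(j:ℝ)+2)))
        = (2 * (rexp (-(2*l)) * (2*l)^(2*j+1))) / (√π * (((2*j+1).factorial : ℝ) * √(2*(j:ℝ)+2))) := by
      simp only [hPdef]; ring
    rw [lhs_eq, rhs_eq, div_le_div_iff₀ (by positivity) (by positivity)]
    have hpow : (2*l)^(2*j+1) = 2^(2*j+1) * (l^j * l^(j+1)) := by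
      rw [mul_pow]; congr 1; rw [two_mul, show j + j + 1 = j + (j+1) by ring, pow_add]
    rw [hpow, ← hE]
    have hC : (0:ℝ) ≤ rexp (-l) * rexp (-l) * (l^j * l^(j+1)) := by positivity
    have hkey := key_odd j
    nlinarith [mul_le_mul_of_nonneg_left hkey hC]
  set g : ℕ → ℝ := fun m => P m * ((1/u + u/((m:ℝ)+1))/2) with hgdef
  have hgnn : ∀ m, 0 ≤ g m := by
    intro m
    simp only [hgdef]
    have h1 : (0:ℝ) ≤ (1/u + u/((m:ℝ)+1))/2 := by positivity
    exact mul_nonneg (hPnn m) h1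
  have hgsum : Summable g := by
    have hle : ∀ m, g m ≤ P m * ((1/u + u)/2) := by
      intro m
      simp only [hgdef]
      apply mul_le_mul_of_nonneg_left _ (hPnn m)
      have h1 : u/((m:ℝ)+1) ≤ u := by
        rw [div_le_iff₀ (by positivity)]
        nlinarith [Nat.cast_nonneg (α := ℝ) m]
      linarith
    exact Summable.of_nonneg_of_le hgnn hle (hPsum.summable.mul_right _)
  have hinj2 : Function.Injective (fun j : ℕ => 2*j) := fun a b h => by dsimp only at h; omega
  have hinj21 : Function.Injective (fun j : ℕ => 2*j+1) := fun a b h => by dsimp only at h; omega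
  have hgE : Summable (fun j => g (2*j)) := hgsum.comp_injective hinj2
  have hgO : Summable (fun j => g (2*j+1)) := hgsum.comp_injective hinj21
  have master : ∀ j : ℕ, p j * (p j + p (j+1)) ≤ 2/√π * (g (2*j) + g (2*j+1)) := by
    intro j
    have e1 : p j * (p j + p (j+1)) = p j * p j + p j * p (j+1) := by ring
    rw [e1, mul_add]
    have hE2 : p j * p j ≤ 2/√π * g (2*j) := by
      refine le_trans (claimE j) ?_
      apply mul_le_mul_of_nonneg_left _ (by positivity)
      simp only [hgdef]
      apply mul_le_mul_of_nonneg_left _ (hPnn (2*j))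
      have hc : ((2*j:ℕ):ℝ) + 1 = 2*(j:ℝ)+1 := by push_cast; ring
      rw [hc]
      exact inv_sqrt_le_amgm _ u (by positivity) hu
    have hO2 : p j * p (j+1) ≤ 2/√π * g (2*j+1) := by
      refine le_trans (claimO j) ?_
      apply mul_le_mul_of_nonneg_left _ (by positivity)
      simp only [hgdef]
      apply mul_le_mul_of_nonneg_left _ (hPnn (2*j+1))
      have hc : ((2*j+1:ℕ):ℝ) + 1 = 2*(j:ℝ)+2 := by push_cast; ring
      rw [hc]
      exact inv_sqrt_le_amgm _ u (by positivity) hu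
    linarith
  have hfnn : ∀ j, 0 ≤ p j * (p j + p (j+1)) := by
    intro j
    exact mul_nonneg (hpnn j) (by linarith [hpnn j, hpnn (j+1)])
  have hhsum : Summable (fun j => 2/√π * (g (2*j) + g (2*j+1))) := (hgE.add hgO).mul_left _
  have hfsum : Summable (fun j => p j * (p j + p (j+1))) :=
    Summable.of_nonneg_of_le hfnn master hhsum
  have hPsucc : ∀ m : ℕ, P m / ((m:ℝ)+1) = P (m+1) / (2*l) := by
    intro m
    simp only [hPdef]
    rw [Nat.factorial_succ]
    have h1 : ((m:ℝ)+1) ≠ 0 := by positivity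
    have h2 : ((m.factorial : ℝ)) ≠ 0 := by positivity
    have h3 : (2*l) ≠ 0 := by positivity
    field_simp
    push_cast
    ring
  have hPdivsum : Summable (fun m => P m / ((m:ℝ)+1)) := by
    refine Summable.of_nonneg_of_le (fun m => by positivity) ?_ hPsum.summable
    intro m
    rw [div_le_iff₀ (by positivity)]
    nlinarith [hPnn m, Nat.cast_nonneg (α := ℝ) m]
  have htail : ∑' m, P (m+1) ≤ 1 := by
    have h0 := Summable.tsum_eq_zero_add hPsum.summable
    rw [hPsum.tsum_eq] at h0
    have hsn : 0 ≤ P 0 := hPnn 0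
    linarith
  have hgsumval : ∑' m, g m ≤ 1/u := by
    have hsplit : ∀ m : ℕ, g m = (1/(2*u)) * P m + (u/2) * (P m / ((m:ℝ)+1)) := by
      intro m; simp only [hgdef]; ring
    have heq : u/(4*l) = 1/(2*u) := by
      rw [div_eq_div_iff (by positivity) (by positivity)]
      nlinarith [hu2]
    calc ∑' m, g m = ∑' m, ((1/(2*u)) * P m + (u/2) * (P m / ((m:ℝ)+1))) := tsum_congr hsplit
      _ = (1/(2*u)) * ∑' m, P m + (u/2) * ∑' m, (P m / ((m:ℝ)+1)) := by
          rw [Summable.tsum_add (hPsum.summable.mul_left _) (hPdivsum.mul_left _),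
            tsum_mul_left, tsum_mul_left]
      _ ≤ (1/(2*u)) * 1 + (u/2) * (1/(2*l)) := by
          have h1 : ∑' m, P m = 1 := hPsum.tsum_eq
          have h2 : ∑' m, (P m / ((m:ℝ)+1)) ≤ 1/(2*l) := by
            calc ∑' m, (P m / ((m:ℝ)+1)) = ∑' m, P (m+1) / (2*l) := tsum_congr hPsucc
              _ = (∑' m, P (m+1)) / (2*l) := by rw [tsum_div_const]
              _ ≤ 1 / (2*l) := by gcongr
          rw [h1]
          nlinarith [h2, hu]
      _ = 1/(2*u) + u/(4*l) := by ring
      _ = 1/u := by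
          rw [heq, ← add_div]
          rw [show (1:ℝ)+1 = 2 by norm_num]
          rw [div_eq_div_iff (by positivity) (by positivity)]
          ring
  have realbound : ∑' j, p j * (p j + p (j+1)) ≤ √(2/(π*l)) := by
    have hfinal : 2/√π * (1/u) = √(2/(π*l)) := by
      have e2 : (2:ℝ)/(π*l) = 4/(π*(2*l)) := by
        rw [div_eq_div_iff (by positivity) (by positivity)]; ring
      have e1 : √(π*(2*l)) = √π * √(2*l) := Real.sqrt_mul Real.pi_pos.le _
      have e4 : √(4:ℝ) = 2 := by
        rw [show (4:ℝ) = 2^2 by norm_num, Real.sqrt_sq (by norm_num)]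
      rw [e2, Real.sqrt_div (by norm_num : (0:ℝ) ≤ 4), e1, e4, hudef]
      ring
    calc ∑' j, p j * (p j + p (j+1))
        ≤ ∑' j, 2/√π * (g (2*j) + g (2*j+1)) := Summable.tsum_le_tsum master hfsum hhsum
      _ = 2/√π * (∑' j, (g (2*j) + g (2*j+1))) := tsum_mul_left
      _ = 2/√π * (∑' j, g (2*j) + ∑' j, g (2*j+1)) := by rw [Summable.tsum_add hgE hgO]
      _ = 2/√π * ∑' m, g m := by rw [tsum_even_add_odd hgE hgO]
      _ ≤ 2/√π * (1/u) := by
          apply mul_le_mul_of_nonneg_left hgsumval (by positivity)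
      _ = √(2/(π*l)) := hfinal
  have hcoe : ∀ j, (poissonPMF lam j : ℝ≥0∞) = ENNReal.ofReal (p j) := by
    intro j
    have h : poissonPMFReal lam j = p j := by
      simp only [poissonPMFReal, hpdef, ← hldef]
    rw [← h]; rfl
  calc (∑' j : ℕ, poissonPMF lam j * (poissonPMF lam j + poissonPMF lam (j + 1)))
      = ∑' j : ℕ, ENNReal.ofReal (p j * (p j + p (j+1))) := by
        refine tsum_congr fun j => ?_
        rw [hcoe j, hcoe (j+1), ← ENNReal.ofReal_add (hpnn j) (hpnn (j+1)),
          ← ENNReal.ofReal_mul (hpnn j)]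
    _ = ENNReal.ofReal (∑' j, p j * (p j + p (j+1))) :=
        (ENNReal.ofReal_tsum_of_nonneg hfnn hfsum).symm
    _ ≤ ENNReal.ofReal (√(2/(π*l))) := ENNReal.ofReal_le_ofReal realbound
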